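/- Suppose $X$ is a nonnegative random variable with a finite moment generating function, and $\lambda$ and $a$ are positive constants such that for any $\theta \ge 0$, $\mathbb{E}(X e^{\theta X}) \le \lambda e^{\theta a}\, \mathbb{E}(e^{\theta X})$. Then for any $t \ge \lambda$, $\mathbb{P}(X \ge t) \le \exp\big(-\frac{t}{a}\big(\log\frac{t}{\lambda} - 1 + \frac{\lambda}{t}\big)\big)$. -/

import Mathlib

open MeasureTheory ProbabilityTheory Real

/-- **Lemma 3.2**: a tail bound from a self-bounding condition on the moment generating
function. -/
theorem tail_of_mgf_bound {Ω : Type*} [MeasurableSpace Ω] (μ : Measure Ω)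
    [IsProbabilityMeasure μ] (X : Ω → ℝ) (hXnn : ∀ ω, 0 ≤ X ω)
    (hmgf : ∀ θ : ℝ, 0 ≤ θ → Integrable (fun ω => Real.exp (θ * X ω)) μ)
    (lam a : ℝ) (hlam : 0 < lam) (ha : 0 < a)
    (hyp : ∀ θ : ℝ, 0 ≤ θ →
      ∫ ω, X ω * Real.exp (θ * X ω) ∂μ ≤
        lam * Real.exp (θ * a) * ∫ ω, Real.exp (θ * X ω) ∂μ)
    (t : ℝ) (ht : lam ≤ t) :
    μ {ω | t ≤ X ω} ≤
      ENNReal.ofReal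
        (Real.exp (-(t / a) * (Real.log (t / lam) - 1 + lam / t))) := by
  have ht0 : 0 < t := lt_of_lt_of_le hlam ht
  -- X is a.e. measurable
  have hXae : AEMeasurable X μ := by
    have h1 : AEMeasurable (fun ω => Real.exp (1 * X ω)) μ :=
      (hmgf 1 zero_le_one).aemeasurable
    have : AEMeasurable (fun ω => Real.log (Real.exp (1 * X ω))) μ :=
      Real.measurable_log.comp_aemeasurable h1
    simpa [Real.log_exp] using this
  have hexp_ae : ∀ θ : ℝ, AEStronglyMeasurable (fun ω => Real.exp (θ * X ω)) μ := fun θ =>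
    (Real.measurable_exp.comp_aemeasurable (hXae.const_mul θ)).aestronglyMeasurable
  have hXexp_ae : ∀ θ : ℝ, AEStronglyMeasurable (fun ω => X ω * Real.exp (θ * X ω)) μ :=
    fun θ => (hXae.mul (Real.measurable_exp.comp_aemeasurable (hXae.const_mul θ))
      ).aestronglyMeasurable
  -- integrability of X * exp(θX)
  have hint' : ∀ θ : ℝ, 0 ≤ θ → Integrable (fun ω => X ω * Real.exp (θ * X ω)) μ := by
    intro θ hθ
    refine (hmgf (θ + 1) (by linarith)).mono (hXexp_ae θ) ?_
    refine Filter.Eventually.of_forall fun ω => ?_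
    have hx := hXnn ω
    rw [Real.norm_eq_abs, Real.norm_eq_abs, abs_of_nonneg (by positivity),
      abs_of_nonneg (Real.exp_pos _).le]
    calc X ω * Real.exp (θ * X ω) ≤ Real.exp (X ω) * Real.exp (θ * X ω) := by
          have : X ω ≤ Real.exp (X ω) := by
            linarith [Real.add_one_le_exp (X ω)]
          exact mul_le_mul_of_nonneg_right this (Real.exp_pos _).le
      _ = Real.exp ((θ + 1) * X ω) := by rw [← Real.exp_add]; ring_nf
  -- derivative of the mgf
  have hderiv : ∀ θ : ℝ, 0 ≤ θ →
      HasDerivAt (fun s => ∫ ω, Real.exp (s * X ω) ∂μ)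
        (∫ ω, X ω * Real.exp (θ * X ω) ∂μ) θ := by
    intro θ hθ
    have h := hasDerivAt_integral_of_dominated_loc_of_deriv_le (s := Metric.ball θ 1)
      (F := fun s ω => Real.exp (s * X ω))
      (F' := fun s ω => X ω * Real.exp (s * X ω))
      (x₀ := θ) (bound := fun ω => X ω * Real.exp ((θ + 1) * X ω))
      (Metric.ball_mem_nhds θ one_pos)
      (Filter.Eventually.of_forall fun s => hexp_ae s)
      (hmgf θ hθ)
      (hXexp_ae θ)
      (Filter.Eventually.of_forall fun ω => ?_)
      (hint' (θ + 1) (by linarith))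
      (Filter.Eventually.of_forall fun ω => ?_)
    · exact h.2
    · intro s hs
      have hx := hXnn ω
      have hs' : s ≤ θ + 1 := by
        have := abs_lt.mp (by simpa [Real.dist_eq] using hs)
        linarith [this.2]
      rw [Real.norm_eq_abs, abs_of_nonneg (by positivity)]
      exact mul_le_mul_of_nonneg_left
        (Real.exp_le_exp.mpr (mul_le_mul_of_nonneg_right hs' hx)) hx
    · intro s _
      have : HasDerivAt (fun u : ℝ => u * X ω) (X ω) s := by
        simpa using (hasDerivAt_id s).mul_const (X ω)
      simpa [mul_comm] using this.exp
  -- positivity of the mgf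
  have hmgf_pos : ∀ θ : ℝ, 0 ≤ θ → 0 < ∫ ω, Real.exp (θ * X ω) ∂μ := by
    intro θ hθ
    have := mgf_pos (μ := μ) (X := X) (t := θ) (hmgf θ hθ)
    simpa [mgf] using this
  -- the key logarithmic bound
  set g : ℝ → ℝ := fun θ =>
    Real.log (∫ ω, Real.exp (θ * X ω) ∂μ) - lam * (Real.exp (θ * a) - 1) / a with hg
  have hg_deriv : ∀ θ : ℝ, 0 ≤ θ → HasDerivAt g
      ((∫ ω, X ω * Real.exp (θ * X ω) ∂μ) / (∫ ω, Real.exp (θ * X ω) ∂μ)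
        - lam * Real.exp (θ * a)) θ := by
    intro θ hθ
    have h1 : HasDerivAt (fun s => Real.log (∫ ω, Real.exp (s * X ω) ∂μ))
        ((∫ ω, X ω * Real.exp (θ * X ω) ∂μ) / (∫ ω, Real.exp (θ * X ω) ∂μ)) θ :=
      (hderiv θ hθ).log (ne_of_gt (hmgf_pos θ hθ))
    have h2 : HasDerivAt (fun s : ℝ => lam * (Real.exp (s * a) - 1) / a)
        (lam * Real.exp (θ * a)) θ := by
      have he : HasDerivAt (fun s : ℝ => Real.exp (s * a)) (Real.exp (θ * a) * a) θ := by
        simpa using ((hasDerivAt_id θ).mul_const a).exp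
      have := ((he.sub_const 1).const_mul lam).div_const a
      refine this.congr_deriv ?_
      rw [mul_div_assoc, mul_div_cancel_right₀ _ (ne_of_gt ha)]
    exact h1.sub h2
  have hg_anti : AntitoneOn g (Set.Ici (0 : ℝ)) := by
    apply antitoneOn_of_deriv_nonpos (convex_Ici 0)
    · intro θ hθ
      exact ((hg_deriv θ hθ).continuousAt).continuousWithinAt
    · intro θ hθ
      rw [interior_Ici] at hθ
      exact ((hg_deriv θ (le_of_lt hθ)).differentiableAt).differentiableWithinAt
    · intro θ hθ
      rw [interior_Ici] at hθ
      rw [(hg_deriv θ (le_of_lt hθ)).deriv]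
      have h := hyp θ (le_of_lt hθ)
      have hm := hmgf_pos θ (le_of_lt hθ)
      rw [sub_nonpos, div_le_iff₀ hm]
      exact h
  have hg0 : g 0 = 0 := by
    simp [hg, integral_const, measure_univ]
  have hkey : ∀ θ : ℝ, 0 ≤ θ →
      Real.log (∫ ω, Real.exp (θ * X ω) ∂μ) ≤ lam * (Real.exp (θ * a) - 1) / a := by
    intro θ hθ
    have := hg_anti (Set.self_mem_Ici) hθ hθ
    rw [hg0] at this
    simpa [hg, sub_nonpos] using this
  -- Chernoff with optimal θ
  set θ₀ : ℝ := Real.log (t / lam) / a with hθ₀def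
  have hθ₀ : 0 ≤ θ₀ := by
    apply div_nonneg _ ha.le
    apply Real.log_nonneg
    rw [le_div_iff₀ hlam]
    linarith
  have hexp_a : Real.exp (θ₀ * a) = t / lam := by
    rw [hθ₀def, div_mul_cancel₀ _ (ne_of_gt ha)]
    exact Real.exp_log (by positivity)
  have hchern := measure_ge_le_exp_mul_mgf (μ := μ) (X := X) (t := θ₀) t hθ₀ (hmgf θ₀ hθ₀)
  have hmgf_le : mgf X μ θ₀ ≤ Real.exp (lam * (Real.exp (θ₀ * a) - 1) / a) := by
    have := hkey θ₀ hθ₀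
    have hpos := hmgf_pos θ₀ hθ₀
    calc mgf X μ θ₀ = Real.exp (Real.log (∫ ω, Real.exp (θ₀ * X ω) ∂μ)) := by
          rw [Real.exp_log hpos]; rfl
      _ ≤ _ := Real.exp_le_exp.mpr this
  have hfinal : Real.exp (-θ₀ * t) * mgf X μ θ₀ ≤
      Real.exp (-(t / a) * (Real.log (t / lam) - 1 + lam / t)) := by
    calc Real.exp (-θ₀ * t) * mgf X μ θ₀
        ≤ Real.exp (-θ₀ * t) * Real.exp (lam * (Real.exp (θ₀ * a) - 1) / a) :=
          mul_le_mul_of_nonneg_left hmgf_le (Real.exp_pos _).le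
      _ = Real.exp (-θ₀ * t + lam * (Real.exp (θ₀ * a) - 1) / a) := (Real.exp_add _ _).symm
      _ = Real.exp (-(t / a) * (Real.log (t / lam) - 1 + lam / t)) := by
          congr 1
          rw [hexp_a, hθ₀def]
          field_simp
          ring
  rw [← ENNReal.ofReal_toReal (measure_ne_top μ {ω | t ≤ X ω})]
  exact ENNReal.ofReal_le_ofReal (le_trans hchern hfinal)
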